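/- If a smooth path of symmetric matrices A(t) is given, then d/dt σ_k(A(t)) = T_{k-1}(A(t))^i_j · d/dt A(t)^j_i; that is, the derivative of σ_k at A in direction B equals the trace of T_{k-1}(A)·B. -/

import Mathlib

open Finset Matrix

/-- The `k`-th elementary symmetric function of a vector in `ℝⁿ`. -/
noncomputable def esymmVec (n k : ℕ) (x : Fin n → ℝ) : ℝ :=
  ∑ s ∈ Finset.univ.powersetCard k, ∏ i ∈ s, x i

/-- `σ_k(A)`: the `k`-th elementary symmetric function of the eigenvalues of a
symmetric (Hermitian) real matrix `A`. -/
noncomputable def sigmaM (n k : ℕ) (A : Matrix (Fin n) (Fin n) ℝ) : ℝ :=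
  if h : A.IsHermitian then esymmVec n k h.eigenvalues else 0

/-- The `q`-th Newton transformation
`T_q(A) = σ_q(A)·I − σ_{q−1}(A)·A + ⋯ + (−1)^q A^q`. -/
noncomputable def newtonT (n q : ℕ) (A : Matrix (Fin n) (Fin n) ℝ) :
    Matrix (Fin n) (Fin n) ℝ :=
  ∑ j ∈ Finset.range (q + 1), ((-1 : ℝ) ^ j * sigmaM n (q - j) A) • A ^ j

namespace SigmaDeriv

open Polynomial

variable {n : ℕ}

lemma eval_charpoly (M : Matrix (Fin n) (Fin n) ℝ) (s : ℝ) :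
    M.charpoly.eval s = (s • (1 : Matrix (Fin n) (Fin n) ℝ) - M).det := by
  rw [Matrix.charpoly, ← Polynomial.coe_evalRingHom, RingHom.map_det]
  congr 1
  ext i j
  by_cases h : i = j <;>
    simp [h, charmatrix_apply, Matrix.one_apply, Matrix.diagonal_apply]

lemma det_smul_one_sub {A : Matrix (Fin n) (Fin n) ℝ} (hA : A.IsHermitian) (s : ℝ) :
    (s • (1 : Matrix (Fin n) (Fin n) ℝ) - A).det = ∏ i, (s - hA.eigenvalues i) := by
  set U : Matrix (Fin n) (Fin n) ℝ := (hA.eigenvectorUnitary : Matrix (Fin n) (Fin n) ℝ)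
  have hU : U * star U = 1 := (Matrix.mem_unitaryGroup_iff).mp hA.eigenvectorUnitary.2
  have h1 : s • (1 : Matrix (Fin n) (Fin n) ℝ) - A
      = U * (s • 1 - diagonal (RCLike.ofReal ∘ hA.eigenvalues)) * star U := by
    rw [Matrix.mul_sub, Matrix.sub_mul, show U * diagonal (RCLike.ofReal ∘ hA.eigenvalues) * star U = A from hA.spectral_theorem.symm]
    congr 1
    rw [Matrix.mul_smul, Matrix.smul_mul, mul_one, hU]
  rw [h1, det_mul, det_mul, mul_comm (det U), mul_assoc, ← det_mul, hU, det_one, mul_one]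
  have h2 : s • (1 : Matrix (Fin n) (Fin n) ℝ) - diagonal (RCLike.ofReal ∘ hA.eigenvalues)
      = diagonal (fun i => s - hA.eigenvalues i) := by
    ext i j
    by_cases h : i = j <;> simp [h, Matrix.one_apply, diagonal_apply]
  rw [h2, det_diagonal]

lemma charpoly_eq {A : Matrix (Fin n) (Fin n) ℝ} (hA : A.IsHermitian) :
    A.charpoly = ∏ i, (X - C (hA.eigenvalues i)) := by
  apply Polynomial.funext
  intro s
  rw [eval_charpoly, det_smul_one_sub hA, eval_prod]
  simp

lemma charpoly_coeff_eq {A : Matrix (Fin n) (Fin n) ℝ} (hA : A.IsHermitian)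
    {k : ℕ} (hk : k ≤ n) :
    A.charpoly.coeff (n - k) = (-1) ^ k * sigmaM n k A := by
  have hcard : Multiset.card (Multiset.map hA.eigenvalues Finset.univ.val) = n := by simp
  have h1 : A.charpoly
      = ((Multiset.map hA.eigenvalues Finset.univ.val).map fun t => X - C t).prod := by
    rw [charpoly_eq hA, Multiset.map_map]
    rfl
  rw [h1, Multiset.prod_X_sub_C_coeff _ (by rw [hcard]; omega), hcard,
    Nat.sub_sub_self hk, Finset.esymm_map_val]
  rw [sigmaM, dif_pos hA]
  rfl

lemma sigmaM_zero {A : Matrix (Fin n) (Fin n) ℝ} (hA : A.IsHermitian) :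
    sigmaM n 0 A = 1 := by
  rw [sigmaM, dif_pos hA, esymmVec]
  simp

lemma newtonT_zero (A : Matrix (Fin n) (Fin n) ℝ) (hA : A.IsHermitian) :
    newtonT n 0 A = 1 := by
  simp [newtonT, sigmaM_zero hA]

lemma newtonT_succ (A : Matrix (Fin n) (Fin n) ℝ) (q : ℕ) :
    newtonT n (q + 1) A = sigmaM n (q + 1) A • 1 - A * newtonT n q A := by
  rw [newtonT, Finset.sum_range_succ' _ (q + 1)]
  rw [newtonT, Finset.mul_sum]
  have hterm : ∀ j : ℕ, ((-1 : ℝ) ^ (j + 1) * sigmaM n (q + 1 - (j + 1)) A) • A ^ (j + 1)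
      = -(A * (((-1 : ℝ) ^ j * sigmaM n (q - j) A) • A ^ j)) := by
    intro j
    rw [Matrix.mul_smul, show A * A ^ j = A ^ (j + 1) by rw [pow_succ']]
    rw [← neg_smul]
    congr 1
    rw [show q + 1 - (j + 1) = q - j by omega, pow_succ]
    ring
  simp only [hterm, Finset.sum_neg_distrib]
  simp only [Nat.sub_zero, pow_zero, one_mul]
  abel

lemma newtonT_dim_eq_zero {A : Matrix (Fin n) (Fin n) ℝ} (hA : A.IsHermitian) :
    newtonT n n A = 0 := by
  have hCH := Matrix.aeval_self_charpoly A
  have hdeg : A.charpoly.natDegree = n := by simp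
  rw [Polynomial.aeval_eq_sum_range' (n := n + 1) (by rw [hdeg]; omega)] at hCH
  have h : newtonT n n A
      = (-1 : ℝ) ^ n • ∑ j ∈ Finset.range (n + 1), A.charpoly.coeff j • A ^ j := by
    rw [newtonT, Finset.smul_sum]
    apply Finset.sum_congr rfl
    intro j hj
    have hjn : j ≤ n := by simp at hj; omega
    have hc : A.charpoly.coeff j = (-1) ^ (n - j) * sigmaM n (n - j) A := by
      have hcc := charpoly_coeff_eq hA (k := n - j) (by omega)
      rwa [show n - (n - j) = j by omega] at hcc
    rw [hc, smul_smul]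
    congr 1
    have h2 : ((-1 : ℝ)) ^ (n - j) * (-1) ^ (n - j) = 1 := by
      rw [← pow_add]; exact Even.neg_one_pow ⟨n - j, rfl⟩
    have hs : ((-1 : ℝ)) ^ (n - j) * (-1) ^ j = (-1) ^ n := by
      rw [← pow_add, Nat.sub_add_cancel hjn]
    linear_combination (-((-1 : ℝ) ^ j * sigmaM n (n - j) A)) * h2
      + ((-1 : ℝ) ^ (n - j) * sigmaM n (n - j) A) * hs
  rw [h, hCH, smul_zero]

/-- The candidate for `adjugate (s • 1 - A)`. -/
noncomputable def Nmat (n : ℕ) (A : Matrix (Fin n) (Fin n) ℝ) (s : ℝ) :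
    Matrix (Fin n) (Fin n) ℝ :=
  ∑ j ∈ Finset.range n, (s ^ (n - 1 - j) * (-1 : ℝ) ^ j) • newtonT n j A

noncomputable def Pmat (n : ℕ) (A : Matrix (Fin n) (Fin n) ℝ) (s : ℝ) (m : ℕ) :
    Matrix (Fin n) (Fin n) ℝ :=
  ∑ j ∈ Finset.range m, (s ^ (m - 1 - j) * (-1 : ℝ) ^ j) • newtonT n j A

lemma Pmat_succ (A : Matrix (Fin n) (Fin n) ℝ) (s : ℝ) (m : ℕ) :
    Pmat n A s (m + 1) = s • Pmat n A s m + (-1 : ℝ) ^ m • newtonT n m A := by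
  rw [Pmat, Finset.sum_range_succ, Pmat, Finset.smul_sum]
  congr 1
  · apply Finset.sum_congr rfl
    intro j hj
    rw [smul_smul]
    congr 1
    rw [show m + 1 - 1 - j = (m - 1 - j) + 1 by simp at hj; omega, pow_succ]
    ring
  · rw [show m + 1 - 1 - m = 0 by omega, pow_zero, one_mul]

lemma key_identity {A : Matrix (Fin n) (Fin n) ℝ} (hA : A.IsHermitian) (s : ℝ) (m : ℕ) :
    (s • (1 : Matrix (Fin n) (Fin n) ℝ) - A) * Pmat n A s m
      = (∑ j ∈ Finset.range (m + 1), (-1 : ℝ) ^ j * sigmaM n j A * s ^ (m - j)) • 1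
        - (-1 : ℝ) ^ m • newtonT n m A := by
  induction m with
  | zero =>
      simp [Pmat, newtonT_zero A hA, sigmaM_zero hA]
  | succ m ih =>
      rw [Pmat_succ, Matrix.mul_add, Matrix.mul_smul, ih, Matrix.mul_smul, Matrix.sub_mul,
        Matrix.smul_mul, one_mul]
      have hAT : A * newtonT n m A = sigmaM n (m + 1) A • 1 - newtonT n (m + 1) A := by
        rw [newtonT_succ]; abel
      rw [hAT]
      have hsum : ∑ j ∈ Finset.range (m + 1 + 1), (-1 : ℝ) ^ j * sigmaM n j A * s ^ (m + 1 - j)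
          = s * (∑ j ∈ Finset.range (m + 1), (-1 : ℝ) ^ j * sigmaM n j A * s ^ (m - j))
            + (-1 : ℝ) ^ (m + 1) * sigmaM n (m + 1) A := by
        rw [Finset.sum_range_succ, Finset.mul_sum, Nat.sub_self, pow_zero, mul_one]
        congr 1
        apply Finset.sum_congr rfl
        intro j hj
        rw [show m + 1 - j = (m - j) + 1 by simp at hj; omega, pow_succ]
        ring
      rw [hsum]
      ext i j
      simp only [Matrix.add_apply, Matrix.sub_apply, Matrix.smul_apply, Matrix.one_apply,
        smul_eq_mul, pow_succ]
      by_cases h : i = j <;> simp [h] <;> ring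

lemma mul_Nmat {A : Matrix (Fin n) (Fin n) ℝ} (hA : A.IsHermitian) (s : ℝ) :
    (s • (1 : Matrix (Fin n) (Fin n) ℝ) - A) * Nmat n A s
      = (s • (1 : Matrix (Fin n) (Fin n) ℝ) - A).det • 1 := by
  have h := key_identity hA s n
  rw [newtonT_dim_eq_zero hA, smul_zero, sub_zero] at h
  rw [show Nmat n A s = Pmat n A s n from rfl, h]
  congr 1
  rw [← eval_charpoly]
  rw [Polynomial.eval_eq_sum_range' (n := n + 1) (by simp)]
  rw [← Finset.sum_range_reflect]
  apply Finset.sum_congr rfl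
  intro j hj
  have hjn : j ≤ n := by simp at hj; omega
  rw [show n + 1 - 1 - j = n - j by omega, show n - (n - j) = j by omega]
  have hc := charpoly_coeff_eq hA (k := n - j) (by omega)
  rw [show n - (n - j) = j by omega] at hc
  rw [hc]

lemma adjugate_eq_Nmat {A : Matrix (Fin n) (Fin n) ℝ} (hA : A.IsHermitian) (s : ℝ)
    (h : IsUnit (s • (1 : Matrix (Fin n) (Fin n) ℝ) - A).det) :
    (s • (1 : Matrix (Fin n) (Fin n) ℝ) - A).adjugate = Nmat n A s := by
  set M := s • (1 : Matrix (Fin n) (Fin n) ℝ) - A with hM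
  calc M.adjugate = (M⁻¹ * M) * M.adjugate := by rw [Matrix.nonsing_inv_mul M h, one_mul]
    _ = M⁻¹ * (M * M.adjugate) := by rw [Matrix.mul_assoc]
    _ = M⁻¹ * (M * Nmat n A s) := by rw [Matrix.mul_adjugate, mul_Nmat hA]
    _ = (M⁻¹ * M) * Nmat n A s := by rw [Matrix.mul_assoc]
    _ = Nmat n A s := by rw [Matrix.nonsing_inv_mul M h, one_mul]

lemma det_hasDerivAt {M : ℝ → Matrix (Fin n) (Fin n) ℝ} {M' : Matrix (Fin n) (Fin n) ℝ} {t₀ : ℝ}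
    (h : ∀ i j, HasDerivAt (fun t => M t i j) (M' i j) t₀) :
    HasDerivAt (fun t => (M t).det) (((M t₀).adjugate * M').trace) t₀ := by
  have hder : HasDerivAt (fun t => (M t).det)
      (∑ σ : Equiv.Perm (Fin n), ((Equiv.Perm.sign σ : ℤ) : ℝ) * ∑ j : Fin n,
        (∏ i ∈ Finset.univ.erase j, M t₀ (σ i) i) • M' (σ j) j) t₀ := by
    have hfn : (fun t => (M t).det) = fun t => ∑ σ : Equiv.Perm (Fin n),
        ((Equiv.Perm.sign σ : ℤ) : ℝ) * ∏ i, M t (σ i) i :=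
      funext fun t => Matrix.det_apply' (M t)
    rw [hfn]
    apply HasDerivAt.fun_sum
    intro σ _
    exact (HasDerivAt.fun_finsetProd (fun i _ => h (σ i) i)).const_mul _
  convert hder using 1
  rw [Matrix.trace]
  have htr : ∀ j : Fin n, ((M t₀).adjugate * M').diag j
      = ((M t₀).updateCol j (fun r => M' r j)).det := by
    intro j
    rw [Matrix.diag]
    rw [show ((M t₀).adjugate * M') j j = ((M t₀).adjugate *ᵥ (fun r => M' r j)) j from rfl]
    rw [← Matrix.cramer_eq_adjugate_mulVec, Matrix.cramer_apply]
  rw [Finset.sum_congr rfl fun j _ => htr j]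
  have hdet : ∀ j : Fin n, ((M t₀).updateCol j (fun r => M' r j)).det
      = ∑ σ : Equiv.Perm (Fin n), ((Equiv.Perm.sign σ : ℤ) : ℝ) *
          ((∏ i ∈ Finset.univ.erase j, M t₀ (σ i) i) * M' (σ j) j) := by
    intro j
    rw [Matrix.det_apply']
    apply Finset.sum_congr rfl
    intro σ _
    congr 1
    rw [← Finset.mul_prod_erase Finset.univ _ (Finset.mem_univ j)]
    rw [Matrix.updateCol_self]
    rw [mul_comm]
    congr 1
    apply Finset.prod_congr rfl
    intro i hi
    rw [Matrix.updateCol_ne (Finset.ne_of_mem_erase hi)]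
  rw [Finset.sum_congr rfl fun j _ => hdet j, Finset.sum_comm]
  apply Finset.sum_congr rfl
  intro σ _
  rw [Finset.mul_sum]
  apply Finset.sum_congr rfl
  intro j _
  rw [smul_eq_mul]

lemma coeff_eq_sum_eval {N : ℕ} (v : Fin N → ℝ) (hv : Function.Injective v)
    (p : ℝ[X]) (hp : p.degree < N) (m : ℕ) :
    p.coeff m = ∑ i, p.eval (v i) * (Lagrange.basis Finset.univ v i).coeff m := by
  have hvs : Set.InjOn v ↑(Finset.univ : Finset (Fin N)) := hv.injOn
  have h := Lagrange.eq_interpolate hvs (by simpa using hp)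
  conv_lhs => rw [h]
  rw [Lagrange.interpolate_apply, Polynomial.finset_sum_coeff]
  exact Finset.sum_congr rfl fun i _ => by rw [Polynomial.coeff_C_mul]

end SigmaDeriv

open SigmaDeriv Polynomial

/-- Differentiating `σ_k` along a path of symmetric matrices: if `A(t)` has entrywise
derivative `B` at `t₀`, then `d/dt σ_k(A(t)) = T_{k-1}(A(t₀))^i_j · B^j_i = tr(T_{k-1}(A(t₀)) B)`. -/
theorem sigma_hasDerivAt (n k : ℕ) (hk1 : 1 ≤ k) (hkn : k ≤ n)
    (A : ℝ → Matrix (Fin n) (Fin n) ℝ) (B : Matrix (Fin n) (Fin n) ℝ) (t₀ : ℝ)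
    (hsymm : ∀ t, (A t).IsHermitian)
    (hder : ∀ i j, HasDerivAt (fun t => A t i j) (B i j) t₀) :
    HasDerivAt (fun t => sigmaM n k (A t)) ((newtonT n (k - 1) (A t₀) * B).trace) t₀ := by
  classical
  have hA₀ : (A t₀).IsHermitian := hsymm t₀
  set lam := hA₀.eigenvalues with hlam
  set C₀ : ℝ := ∑ i, |lam i| with hC₀
  have hlamle : ∀ j, lam j ≤ C₀ := by
    intro j
    calc lam j ≤ |lam j| := le_abs_self _
      _ ≤ C₀ := Finset.single_le_sum (f := fun i => |lam i|) (fun i _ => abs_nonneg _)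
        (Finset.mem_univ j)
  set v : Fin (n + 1) → ℝ := fun i => C₀ + 1 + i with hv
  have hvinj : Function.Injective v := by
    intro a b hab
    simp only [hv] at hab
    have hab' : (a : ℝ) = b := by linarith
    exact Fin.ext (by exact_mod_cast hab')
  have hdetpos : ∀ i : Fin (n + 1),
      0 < (v i • (1 : Matrix (Fin n) (Fin n) ℝ) - A t₀).det := by
    intro i
    rw [det_smul_one_sub hA₀]
    apply Finset.prod_pos
    intro j _
    have h0 : (0 : ℝ) ≤ (i : ℝ) := by positivity
    have h1 := hlamle j
    simp only [hv]
    rw [← hlam]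
    linarith
  set w : Fin (n + 1) → ℝ := fun i => (Lagrange.basis Finset.univ v i).coeff (n - k) with hw
  have hcoeffsum : ∀ q : ℕ, q ≤ n →
      ∑ i, (v i) ^ q * w i = if n - k = q then 1 else 0 := by
    intro q hq
    have h := coeff_eq_sum_eval v hvinj (X ^ q)
      (by rw [degree_X_pow]; exact_mod_cast Nat.lt_succ_of_le hq) (n - k)
    rw [coeff_X_pow] at h
    rw [h]
    apply Finset.sum_congr rfl
    intro i _
    simp [hw]
  have hdegchar : ∀ t, (A t).charpoly.degree < (n + 1 : ℕ) := by
    intro t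
    rw [Matrix.charpoly_degree_eq_dim]
    simp only [Fintype.card_fin]
    exact_mod_cast Nat.lt_succ_self n
  have hfun : ∀ t, sigmaM n k (A t)
      = (-1 : ℝ) ^ k * ∑ i, (v i • (1 : Matrix (Fin n) (Fin n) ℝ) - A t).det * w i := by
    intro t
    have h1 := charpoly_coeff_eq (hsymm t) hkn
    have h2 := coeff_eq_sum_eval v hvinj (A t).charpoly (hdegchar t) (n - k)
    simp only [eval_charpoly] at h2
    rw [h2] at h1
    have hkk : ((-1 : ℝ) ^ k) * ((-1 : ℝ) ^ k) = 1 := by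
      rw [← pow_add]; exact Even.neg_one_pow ⟨k, rfl⟩
    simp only [hw]
    rw [h1, ← mul_assoc, hkk, one_mul]
  have hDent : ∀ (i : Fin (n + 1)) (r c : Fin n),
      HasDerivAt (fun t => (v i • (1 : Matrix (Fin n) (Fin n) ℝ) - A t) r c) ((-B) r c) t₀ := by
    intro i r c
    have h := (hder r c).const_sub ((v i • (1 : Matrix (Fin n) (Fin n) ℝ)) r c)
    exact h
  have hD : ∀ i : Fin (n + 1),
      HasDerivAt (fun t => (v i • (1 : Matrix (Fin n) (Fin n) ℝ) - A t).det)
        (((v i • (1 : Matrix (Fin n) (Fin n) ℝ) - A t₀).adjugate * (-B)).trace) t₀ :=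
    fun i => det_hasDerivAt (hDent i)
  have hbig : HasDerivAt
      (fun t => (-1 : ℝ) ^ k * ∑ i, (v i • (1 : Matrix (Fin n) (Fin n) ℝ) - A t).det * w i)
      ((-1 : ℝ) ^ k *
        ∑ i, ((v i • (1 : Matrix (Fin n) (Fin n) ℝ) - A t₀).adjugate * (-B)).trace * w i) t₀ :=
    (HasDerivAt.fun_sum (fun i _ => (hD i).mul_const (w i))).const_mul _
  have hmain : HasDerivAt (fun t => sigmaM n k (A t))
      ((-1 : ℝ) ^ k *
        ∑ i, ((v i • (1 : Matrix (Fin n) (Fin n) ℝ) - A t₀).adjugate * (-B)).trace * w i) t₀ :=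
    hbig.congr_of_eventuallyEq (Filter.Eventually.of_forall hfun)
  convert hmain using 1
  have hadj : ∀ i : Fin (n + 1), (v i • (1 : Matrix (Fin n) (Fin n) ℝ) - A t₀).adjugate
      = Nmat n (A t₀) (v i) := fun i =>
    adjugate_eq_Nmat hA₀ (v i) (isUnit_iff_ne_zero.mpr (ne_of_gt (hdetpos i)))
  have htrN : ∀ i : Fin (n + 1), ((Nmat n (A t₀) (v i)) * (-B)).trace
      = -∑ j ∈ Finset.range n,
          (v i ^ (n - 1 - j) * (-1 : ℝ) ^ j) * (newtonT n j (A t₀) * B).trace := by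
    intro i
    rw [Nmat, Finset.sum_mul, Matrix.trace_sum, ← Finset.sum_neg_distrib]
    apply Finset.sum_congr rfl
    intro j _
    rw [Matrix.smul_mul, Matrix.trace_smul, Matrix.mul_neg, Matrix.trace_neg, smul_eq_mul]
    ring
  rw [Finset.sum_congr rfl (fun i (_ : i ∈ Finset.univ) => by rw [hadj i, htrN i])]
  have h1 : ∀ i : Fin (n + 1),
      (-∑ j ∈ Finset.range n,
          (v i ^ (n - 1 - j) * (-1 : ℝ) ^ j) * (newtonT n j (A t₀) * B).trace) * w i
      = ∑ j ∈ Finset.range n,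
          (-((-1 : ℝ) ^ j * (newtonT n j (A t₀) * B).trace)) * (v i ^ (n - 1 - j) * w i) := by
    intro i
    rw [neg_mul, Finset.sum_mul, ← Finset.sum_neg_distrib]
    apply Finset.sum_congr rfl
    intro j _
    ring
  rw [Finset.sum_congr rfl fun i (_ : i ∈ Finset.univ) => h1 i, Finset.sum_comm]
  rw [Finset.sum_congr rfl fun j (_ : j ∈ Finset.range n) =>
    (Finset.mul_sum Finset.univ (fun i => v i ^ (n - 1 - j) * w i)
      (-((-1 : ℝ) ^ j * (newtonT n j (A t₀) * B).trace))).symm]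
  have hcollapse : ∑ j ∈ Finset.range n,
      (-((-1 : ℝ) ^ j * (newtonT n j (A t₀) * B).trace)) *
        ∑ i : Fin (n + 1), v i ^ (n - 1 - j) * w i
      = -((-1 : ℝ) ^ (k - 1) * (newtonT n (k - 1) (A t₀) * B).trace) := by
    rw [Finset.sum_eq_single (k - 1)]
    · rw [hcoeffsum (n - 1 - (k - 1)) (by omega), if_pos (by omega), mul_one]
    · intro j hj hne
      rw [hcoeffsum (n - 1 - j) (by omega), if_neg (by
        simp only [Finset.mem_range] at hj; omega), mul_zero]
    · intro hnk
      exact absurd (Finset.mem_range.mpr (by omega)) hnk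
  rw [hcollapse]
  have hsgn : (-1 : ℝ) ^ k * (-1 : ℝ) ^ (k - 1) = -1 := by
    rw [← pow_add, show k + (k - 1) = 2 * (k - 1) + 1 by omega, pow_succ, pow_mul]
    norm_num
  linear_combination (newtonT n (k - 1) (A t₀) * B).trace * hsgn
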